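/- arXiv:1103.2485 — 6 statements merged into one kernel-verified Lean document; each statement's English description precedes it below -/
import Mathlib

section
/- Let U ⊆ ℂ be open, let u, h₁, h₂ : ℂ → ℝ and ξ₁, ξ₂, σ : ℂ → ℂ be ℝ-differentiable on U, and assume the Codazzi equations hold on U: e^{2u}·(∂h₁ + h₂·σ) = ∂̄ξ₁ + ξ₂·conj(σ) and e^{2u}·(∂h₂ − h₁·σ) = ∂̄ξ₂ − ξ₁·conj(σ). Set aᵢ := (e^{−u}·ξᵢ + e^{u}·hᵢ)/√2 and bᵢ := (e^{−u}·ξᵢ − e^{u}·hᵢ)/√2 for i = 1,2, let A_p := A_p(e^{u}/√2, a₁, a₂, b₁, b₂), and let B_k be the 5×5 complex matrix whose only nonzero entries are (1,2) ↦ −i·∂̄u, (2,1) ↦ i·∂̄u, (3,4) ↦ conj(σ), (4,3) ↦ −conj(σ). Then the matrix equation ∂̄A_p + (B_k·A_p − A_p·B_k) = 0 holds identically on U if and only if ∂h₁ + h₂·σ = 0 and ∂h₂ − h₁·σ = 0 hold identically on U. (This is the analytic content of the Ruh–Vilms-type theorem: the Gauss map of a conformal immersion into S⁴ is harmonic for the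 normal metric on SO₅/T² if and only if the immersion has parallel mean curvature vector.) -/
open Complex Matrix

noncomputable section

attribute [local instance] Matrix.normedAddCommGroup Matrix.normedSpace

/-- Wirtinger derivative ∂G := (1/2)(∂ₓG − i∂ᵧG). -/
def wDz {E : Type*} [NormedAddCommGroup E] [NormedSpace ℂ E] (G : ℂ → E) (z : ℂ) : E :=
  (2⁻¹ : ℂ) • (fderiv ℝ G z 1 - Complex.I • fderiv ℝ G z Complex.I)

/-- Wirtinger derivative ∂̄G := (1/2)(∂ₓG + i∂ᵧG). -/
def wDzBar {E : Type*} [NormedAddCommGroup E] [NormedSpace ℂ E] (G : ℂ → E) (z : ℂ) : E :=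
  (2⁻¹ : ℂ) • (fderiv ℝ G z 1 + Complex.I • fderiv ℝ G z Complex.I)

/-- The 𝔭-part matrix A_p(r, a₁, a₂, b₁, b₂). -/
def Ap (r a₁ a₂ b₁ b₂ : ℂ) : Matrix (Fin 5) (Fin 5) ℂ :=
  !![0, -r, Complex.I * r, 0, 0;
     r, 0, 0, -a₁, -a₂;
     -(Complex.I * r), 0, 0, -(Complex.I * b₁), -(Complex.I * b₂);
     0, a₁, Complex.I * b₁, 0, 0;
     0, a₂, Complex.I * b₂, 0, 0]

/-- The coefficient aᵢ = (e^{-u}ξᵢ + e^{u}hᵢ)/√2. -/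
def aCoef (u : ℂ → ℝ) (ξ : ℂ → ℂ) (h : ℂ → ℝ) (z : ℂ) : ℂ :=
  ((Real.exp (-u z) : ℝ) * ξ z + (Real.exp (u z) : ℝ) * (h z : ℂ)) / (Real.sqrt 2 : ℝ)

/-- The coefficient bᵢ = (e^{-u}ξᵢ - e^{u}hᵢ)/√2. -/
def bCoef (u : ℂ → ℝ) (ξ : ℂ → ℂ) (h : ℂ → ℝ) (z : ℂ) : ℂ :=
  ((Real.exp (-u z) : ℝ) * ξ z - (Real.exp (u z) : ℝ) * (h z : ℂ)) / (Real.sqrt 2 : ℝ)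

/-- The 𝔭-part A_p of the Maurer–Cartan form of an adapted frame. -/
def APfun (u h₁ h₂ : ℂ → ℝ) (ξ₁ ξ₂ : ℂ → ℂ) (z : ℂ) : Matrix (Fin 5) (Fin 5) ℂ :=
  Ap ((Real.exp (u z) / Real.sqrt 2 : ℝ) : ℂ)
    (aCoef u ξ₁ h₁ z) (aCoef u ξ₂ h₂ z) (bCoef u ξ₁ h₁ z) (bCoef u ξ₂ h₂ z)

/-- The 𝔨-part B_k of the Maurer–Cartan form of an adapted frame. -/
def BKfun (u : ℂ → ℝ) (σ : ℂ → ℂ) (z : ℂ) : Matrix (Fin 5) (Fin 5) ℂ :=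
  !![0, 0, 0, 0, 0;
     0, 0, -(Complex.I * wDzBar (fun w => (u w : ℂ)) z), 0, 0;
     0, Complex.I * wDzBar (fun w => (u w : ℂ)) z, 0, 0, 0;
     0, 0, 0, 0, (starRingEnd ℂ) (σ z);
     0, 0, 0, -((starRingEnd ℂ) (σ z)), 0]


variable {E : Type*} [NormedAddCommGroup E] [NormedSpace ℂ E]

lemma wDzBar_add (f g : ℂ → E) (z : ℂ) (hf : DifferentiableAt ℝ f z)
    (hg : DifferentiableAt ℝ g z) :
    wDzBar (fun w => f w + g w) z = wDzBar f z + wDzBar g z := by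
  have h := (hf.hasFDerivAt.fun_add hg.hasFDerivAt).fderiv
  simp only [wDzBar, h, ContinuousLinearMap.add_apply]
  module

lemma wDzBar_const (v : E) (z : ℂ) : wDzBar (fun _ => v) z = 0 := by
  simp [wDzBar, fderiv_const]

lemma wDzBar_smul_const (c : ℂ → ℂ) (v : E) (z : ℂ) (hc : DifferentiableAt ℝ c z) :
    wDzBar (fun w => c w • v) z = wDzBar c z • v := by
  have h := (hc.hasFDerivAt.smul_const v).fderiv
  simp only [wDzBar, h, ContinuousLinearMap.smulRight_apply, smul_smul, ← add_smul]
  congr 1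

lemma wDzBar_mul (f g : ℂ → ℂ) (z : ℂ) (hf : DifferentiableAt ℝ f z)
    (hg : DifferentiableAt ℝ g z) :
    wDzBar (fun w => f w * g w) z = wDzBar f z * g z + f z * wDzBar g z := by
  have h := (hf.hasFDerivAt.fun_mul hg.hasFDerivAt).fderiv
  simp only [wDzBar, h, ContinuousLinearMap.add_apply, ContinuousLinearMap.smul_apply,
    smul_eq_mul]
  ring

lemma wDzBar_cexp (g : ℂ → ℂ) (z : ℂ) (hg : DifferentiableAt ℝ g z) :
    wDzBar (fun w => Complex.exp (g w)) z = Complex.exp (g z) * wDzBar g z := by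
  have h := (hg.hasFDerivAt.cexp).fderiv
  simp only [wDzBar, h, ContinuousLinearMap.smul_apply, smul_eq_mul]
  ring

lemma wDzBar_neg (f : ℂ → ℂ) (z : ℂ) :
    wDzBar (fun w => -(f w)) z = -wDzBar f z := by
  simp only [wDzBar, fderiv_fun_neg, ContinuousLinearMap.neg_apply]
  module

lemma wDzBar_ofReal (g : ℂ → ℝ) (z : ℂ)
    (hg : DifferentiableAt ℝ (fun w => (g w : ℂ)) z) :
    wDzBar (fun w => (g w : ℂ)) z = (starRingEnd ℂ) (wDz (fun w => (g w : ℂ)) z) := by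
  have hG : DifferentiableAt ℝ g z := by
    have : g = fun w => Complex.reCLM ((g w : ℂ)) := by funext w; simp
    rw [this]
    exact Complex.reCLM.differentiableAt.comp z hg
  have hco : (fun w => (g w : ℂ)) = fun w => Complex.ofRealCLM (g w) := by
    funext w; simp
  have h : fderiv ℝ (fun w => (g w : ℂ)) z = Complex.ofRealCLM.comp (fderiv ℝ g z) := by
    rw [hco]
    exact (Complex.ofRealCLM.hasFDerivAt.comp z hG.hasFDerivAt).fderiv
  simp only [wDz, wDzBar, h, ContinuousLinearMap.comp_apply, Complex.ofRealCLM_apply,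
    smul_eq_mul]
  rw [_root_.map_mul, map_sub, _root_.map_mul]
  simp [Complex.conj_ofReal, Complex.conj_I]
  exact Or.inl (by rw [Complex.conj_ofNat])

set_option maxHeartbeats 1000000 in
lemma Ap_decomp (r a₁ a₂ b₁ b₂ : ℂ) :
    Ap r a₁ a₂ b₁ b₂ = r • Ap 1 0 0 0 0 + a₁ • Ap 0 1 0 0 0 + a₂ • Ap 0 0 1 0 0
      + b₁ • Ap 0 0 0 1 0 + b₂ • Ap 0 0 0 0 1 := by
  ext i j
  fin_cases i <;> fin_cases j <;>
    simp [Ap, Matrix.smul_apply, Matrix.vecHead, Matrix.vecTail, Function.comp] <;> ring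

def Bmat (ω s : ℂ) : Matrix (Fin 5) (Fin 5) ℂ :=
  !![0, 0, 0, 0, 0;
     0, 0, -(Complex.I * ω), 0, 0;
     0, Complex.I * ω, 0, 0, 0;
     0, 0, 0, 0, s;
     0, 0, 0, -s, 0]

set_option maxHeartbeats 3000000 in
lemma key_matrix (r a₁ a₂ b₁ b₂ dr da₁ da₂ db₁ db₂ ω s : ℂ) :
    Ap dr da₁ da₂ db₁ db₂ + (Bmat ω s * Ap r a₁ a₂ b₁ b₂ - Ap r a₁ a₂ b₁ b₂ * Bmat ω s)
      = Ap (dr - r * ω) (da₁ + ω * b₁ + s * a₂) (da₂ + ω * b₂ - s * a₁)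
          (db₁ + ω * a₁ + s * b₂) (db₂ + ω * a₂ - s * b₁) := by
  ext i j
  fin_cases i <;> fin_cases j <;>
    simp [Ap, Bmat, Matrix.mul_apply, Fin.sum_univ_five, Matrix.vecHead, Matrix.vecTail,
      Function.comp] <;> ring_nf <;> simp [Complex.I_sq] <;> ring_nf

lemma Ap_eq_zero_iff (r a₁ a₂ b₁ b₂ : ℂ) :
    Ap r a₁ a₂ b₁ b₂ = 0 ↔ r = 0 ∧ a₁ = 0 ∧ a₂ = 0 ∧ b₁ = 0 ∧ b₂ = 0 := by
  constructor
  · intro h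
    refine ⟨?_, ?_, ?_, ?_, ?_⟩
    · have := congrFun (congrFun h 1) 0; simpa [Ap] using this
    · have := congrFun (congrFun h 3) 1; simpa [Ap] using this
    · have := congrFun (congrFun h 4) 1; simpa [Ap] using this
    · have := congrFun (congrFun h 3) 2; simpa [Ap, Complex.I_ne_zero] using this
    · have := congrFun (congrFun h 4) 2; simpa [Ap, Complex.I_ne_zero] using this
  · rintro ⟨h1, h2, h3, h4, h5⟩
    subst h1 h2 h3 h4 h5
    ext i j
    fin_cases i <;> fin_cases j <;> simp [Ap, Matrix.zero_apply, Matrix.vecHead, Matrix.vecTail, Function.comp]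

lemma wDzBar_mul_const (f : ℂ → ℂ) (c : ℂ) (z : ℂ) (hf : DifferentiableAt ℝ f z) :
    wDzBar (fun w => f w * c) z = wDzBar f z * c := by
  simpa [smul_eq_mul] using wDzBar_smul_const f c z hf

lemma exp_ofReal_diff (u : ℂ → ℝ) (z : ℂ) (hu : DifferentiableAt ℝ (fun w => (u w : ℂ)) z) :
    DifferentiableAt ℝ (fun w => ((Real.exp (u w) : ℝ) : ℂ)) z := by
  have : (fun w => ((Real.exp (u w) : ℝ) : ℂ)) = fun w => Complex.exp ((u w : ℂ)) := by
    funext w; exact Complex.ofReal_exp _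
  rw [this]; exact hu.cexp

lemma exp_neg_ofReal_diff (u : ℂ → ℝ) (z : ℂ)
    (hu : DifferentiableAt ℝ (fun w => (u w : ℂ)) z) :
    DifferentiableAt ℝ (fun w => ((Real.exp (-u w) : ℝ) : ℂ)) z := by
  have : (fun w => ((Real.exp (-u w) : ℝ) : ℂ)) = fun w => Complex.exp (-(u w : ℂ)) := by
    funext w; push_cast [Complex.ofReal_exp]; ring_nf
  rw [this]; exact hu.neg.cexp

lemma wDzBar_exp_ofReal (u : ℂ → ℝ) (z : ℂ)
    (hu : DifferentiableAt ℝ (fun w => (u w : ℂ)) z) :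
    wDzBar (fun w => ((Real.exp (u w) : ℝ) : ℂ)) z
      = (Real.exp (u z) : ℂ) * wDzBar (fun w => (u w : ℂ)) z := by
  have h : (fun w => ((Real.exp (u w) : ℝ) : ℂ)) = fun w => Complex.exp ((u w : ℂ)) := by
    funext w; exact Complex.ofReal_exp _
  rw [h, wDzBar_cexp _ z hu, Complex.ofReal_exp]

lemma wDzBar_exp_neg_ofReal (u : ℂ → ℝ) (z : ℂ)
    (hu : DifferentiableAt ℝ (fun w => (u w : ℂ)) z) :
    wDzBar (fun w => ((Real.exp (-u w) : ℝ) : ℂ)) z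
      = -((Real.exp (-u z) : ℂ) * wDzBar (fun w => (u w : ℂ)) z) := by
  have h : (fun w => ((Real.exp (-u w) : ℝ) : ℂ)) = fun w => Complex.exp (-((u w : ℂ))) := by
    funext w; push_cast [Complex.ofReal_exp]; ring_nf
  rw [h, wDzBar_cexp _ z hu.fun_neg, wDzBar_neg]
  push_cast
  ring

lemma aCoef_eq (u : ℂ → ℝ) (ξ : ℂ → ℂ) (h : ℂ → ℝ) :
    aCoef u ξ h = fun w =>
      (((Real.exp (-u w) : ℝ) : ℂ) * ξ w + ((Real.exp (u w) : ℝ) : ℂ) * (h w : ℂ))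
        * (((Real.sqrt 2 : ℝ) : ℂ))⁻¹ := by
  funext w; rw [aCoef, div_eq_mul_inv]

lemma bCoef_eq (u : ℂ → ℝ) (ξ : ℂ → ℂ) (h : ℂ → ℝ) :
    bCoef u ξ h = fun w =>
      (((Real.exp (-u w) : ℝ) : ℂ) * ξ w - ((Real.exp (u w) : ℝ) : ℂ) * (h w : ℂ))
        * (((Real.sqrt 2 : ℝ) : ℂ))⁻¹ := by
  funext w; rw [bCoef, div_eq_mul_inv]

lemma aCoef_diff (u : ℂ → ℝ) (ξ : ℂ → ℂ) (h : ℂ → ℝ) (z : ℂ)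
    (hu : DifferentiableAt ℝ (fun w => (u w : ℂ)) z) (hξ : DifferentiableAt ℝ ξ z)
    (hh : DifferentiableAt ℝ (fun w => (h w : ℂ)) z) :
    DifferentiableAt ℝ (aCoef u ξ h) z := by
  rw [aCoef_eq]
  exact (((exp_neg_ofReal_diff u z hu).mul hξ).add
    ((exp_ofReal_diff u z hu).mul hh)).mul_const _

lemma bCoef_diff (u : ℂ → ℝ) (ξ : ℂ → ℂ) (h : ℂ → ℝ) (z : ℂ)
    (hu : DifferentiableAt ℝ (fun w => (u w : ℂ)) z) (hξ : DifferentiableAt ℝ ξ z)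
    (hh : DifferentiableAt ℝ (fun w => (h w : ℂ)) z) :
    DifferentiableAt ℝ (bCoef u ξ h) z := by
  rw [bCoef_eq]
  exact (((exp_neg_ofReal_diff u z hu).mul hξ).sub
    ((exp_ofReal_diff u z hu).mul hh)).mul_const _

lemma wDzBar_aCoef (u : ℂ → ℝ) (ξ : ℂ → ℂ) (h : ℂ → ℝ) (z : ℂ)
    (hu : DifferentiableAt ℝ (fun w => (u w : ℂ)) z) (hξ : DifferentiableAt ℝ ξ z)
    (hh : DifferentiableAt ℝ (fun w => (h w : ℂ)) z) :
    wDzBar (aCoef u ξ h) z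
      = ((Real.exp (-u z) : ℂ) * (wDzBar ξ z - wDzBar (fun w => (u w : ℂ)) z * ξ z)
        + (Real.exp (u z) : ℂ) * (wDzBar (fun w => (u w : ℂ)) z * (h z : ℂ)
            + (starRingEnd ℂ) (wDz (fun w => (h w : ℂ)) z))) * (((Real.sqrt 2 : ℝ)) : ℂ)⁻¹ := by
  rw [aCoef_eq,
    wDzBar_mul_const _ _ z (((exp_neg_ofReal_diff u z hu).fun_mul hξ).fun_add
      ((exp_ofReal_diff u z hu).fun_mul hh)),
    wDzBar_add _ _ z ((exp_neg_ofReal_diff u z hu).fun_mul hξ)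
      ((exp_ofReal_diff u z hu).fun_mul hh),
    wDzBar_mul _ _ z (exp_neg_ofReal_diff u z hu) hξ,
    wDzBar_mul _ _ z (exp_ofReal_diff u z hu) hh,
    wDzBar_exp_ofReal u z hu, wDzBar_exp_neg_ofReal u z hu,
    wDzBar_ofReal h z hh]
  ring

lemma wDzBar_bCoef (u : ℂ → ℝ) (ξ : ℂ → ℂ) (h : ℂ → ℝ) (z : ℂ)
    (hu : DifferentiableAt ℝ (fun w => (u w : ℂ)) z) (hξ : DifferentiableAt ℝ ξ z)
    (hh : DifferentiableAt ℝ (fun w => (h w : ℂ)) z) :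
    wDzBar (bCoef u ξ h) z
      = ((Real.exp (-u z) : ℂ) * (wDzBar ξ z - wDzBar (fun w => (u w : ℂ)) z * ξ z)
        - (Real.exp (u z) : ℂ) * (wDzBar (fun w => (u w : ℂ)) z * (h z : ℂ)
            + (starRingEnd ℂ) (wDz (fun w => (h w : ℂ)) z))) * (((Real.sqrt 2 : ℝ)) : ℂ)⁻¹ := by
  have hsub : (bCoef u ξ h) = fun w =>
      (((Real.exp (-u w) : ℝ) : ℂ) * ξ w + ((Real.exp (u w) : ℝ) : ℂ) * (h w : ℂ) * (-1))
        * (((Real.sqrt 2 : ℝ) : ℂ))⁻¹ := by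
    funext w; rw [bCoef, div_eq_mul_inv]; ring
  rw [hsub,
    wDzBar_mul_const _ _ z (((exp_neg_ofReal_diff u z hu).fun_mul hξ).fun_add
      (((exp_ofReal_diff u z hu).fun_mul hh).mul_const _)),
    wDzBar_add _ _ z ((exp_neg_ofReal_diff u z hu).fun_mul hξ)
      (((exp_ofReal_diff u z hu).fun_mul hh).mul_const _),
    wDzBar_mul _ _ z (exp_neg_ofReal_diff u z hu) hξ,
    wDzBar_mul_const _ _ z ((exp_ofReal_diff u z hu).fun_mul hh),
    wDzBar_mul _ _ z (exp_ofReal_diff u z hu) hh,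
    wDzBar_exp_ofReal u z hu, wDzBar_exp_neg_ofReal u z hu,
    wDzBar_ofReal h z hh]
  ring

lemma wDzBar_Ap (r a₁ a₂ b₁ b₂ : ℂ → ℂ) (z : ℂ)
    (hr : DifferentiableAt ℝ r z) (ha₁ : DifferentiableAt ℝ a₁ z)
    (ha₂ : DifferentiableAt ℝ a₂ z) (hb₁ : DifferentiableAt ℝ b₁ z)
    (hb₂ : DifferentiableAt ℝ b₂ z) :
    wDzBar (fun w => Ap (r w) (a₁ w) (a₂ w) (b₁ w) (b₂ w)) z
      = Ap (wDzBar r z) (wDzBar a₁ z) (wDzBar a₂ z) (wDzBar b₁ z) (wDzBar b₂ z) := by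
  have hfun : (fun w => Ap (r w) (a₁ w) (a₂ w) (b₁ w) (b₂ w))
      = fun w => (fun v => r v • Ap 1 0 0 0 0 + (fun v₂ => a₁ v₂ • Ap 0 1 0 0 0
          + (fun v₃ => a₂ v₃ • Ap 0 0 1 0 0 + (fun v₄ => b₁ v₄ • Ap 0 0 0 1 0
            + b₂ v₄ • Ap 0 0 0 0 1) v₃) v₂) v) w := by
    funext w
    simp only [Ap_decomp (r w) (a₁ w) (a₂ w) (b₁ w) (b₂ w)]
    abel
  have d5 : DifferentiableAt ℝ (fun w => b₂ w • Ap 0 0 0 0 1) z := hb₂.smul_const _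
  have d4 : DifferentiableAt ℝ (fun w => b₁ w • Ap 0 0 0 1 0 + b₂ w • Ap 0 0 0 0 1) z :=
    (hb₁.smul_const _).add d5
  have d3 : DifferentiableAt ℝ (fun w => a₂ w • Ap 0 0 1 0 0
      + (b₁ w • Ap 0 0 0 1 0 + b₂ w • Ap 0 0 0 0 1)) z := (ha₂.smul_const _).add d4
  have d2 : DifferentiableAt ℝ (fun w => a₁ w • Ap 0 1 0 0 0 + (a₂ w • Ap 0 0 1 0 0
      + (b₁ w • Ap 0 0 0 1 0 + b₂ w • Ap 0 0 0 0 1))) z := (ha₁.smul_const _).add d3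
  rw [hfun]
  rw [wDzBar_add _ _ z (hr.smul_const _) d2,
    wDzBar_add _ _ z (ha₁.smul_const _) d3,
    wDzBar_add _ _ z (ha₂.smul_const _) d4,
    wDzBar_add _ _ z (hb₁.smul_const _) d5,
    wDzBar_smul_const _ _ z hr, wDzBar_smul_const _ _ z ha₁,
    wDzBar_smul_const _ _ z ha₂, wDzBar_smul_const _ _ z hb₁,
    wDzBar_smul_const _ _ z hb₂,
    Ap_decomp (wDzBar r z) (wDzBar a₁ z) (wDzBar a₂ z) (wDzBar b₁ z) (wDzBar b₂ z)]
  abel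

/-- Ruh–Vilms for surfaces in S⁴: the Gauss map is normal-harmonic,
i.e. ∂̄A_𝔭 + [B_𝔨, A_𝔭] = 0, iff the mean curvature vector is parallel,
i.e. ∂h₁ + h₂σ = 0 and ∂h₂ − h₁σ = 0. -/
theorem gauss_map_normal_harmonic_iff_parallel_mean_curvature
    (U : Set ℂ) (hU : IsOpen U)
    (u h₁ h₂ : ℂ → ℝ) (ξ₁ ξ₂ σ : ℂ → ℂ)
    (hu : ∀ z ∈ U, DifferentiableAt ℝ (fun w => (u w : ℂ)) z)
    (hh₁ : ∀ z ∈ U, DifferentiableAt ℝ (fun w => (h₁ w : ℂ)) z)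
    (hh₂ : ∀ z ∈ U, DifferentiableAt ℝ (fun w => (h₂ w : ℂ)) z)
    (hξ₁ : ∀ z ∈ U, DifferentiableAt ℝ ξ₁ z)
    (hξ₂ : ∀ z ∈ U, DifferentiableAt ℝ ξ₂ z)
    (hσ : ∀ z ∈ U, DifferentiableAt ℝ σ z)
    (codazzi₁ : ∀ z ∈ U,
      (Real.exp (2 * u z) : ℂ) * (wDz (fun w => (h₁ w : ℂ)) z + (h₂ z : ℂ) * σ z)
        = wDzBar ξ₁ z + ξ₂ z * (starRingEnd ℂ) (σ z))
    (codazzi₂ : ∀ z ∈ U,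
      (Real.exp (2 * u z) : ℂ) * (wDz (fun w => (h₂ w : ℂ)) z - (h₁ z : ℂ) * σ z)
        = wDzBar ξ₂ z - ξ₁ z * (starRingEnd ℂ) (σ z)) :
    (∀ z ∈ U,
        wDzBar (APfun u h₁ h₂ ξ₁ ξ₂) z
          + (BKfun u σ z * APfun u h₁ h₂ ξ₁ ξ₂ z
              - APfun u h₁ h₂ ξ₁ ξ₂ z * BKfun u σ z) = 0)
      ↔ (∀ z ∈ U,
          wDz (fun w => (h₁ w : ℂ)) z + (h₂ z : ℂ) * σ z = 0 ∧
          wDz (fun w => (h₂ w : ℂ)) z - (h₁ z : ℂ) * σ z = 0) := by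
  have key : ∀ z ∈ U,
      (wDzBar (APfun u h₁ h₂ ξ₁ ξ₂) z
          + (BKfun u σ z * APfun u h₁ h₂ ξ₁ ξ₂ z
              - APfun u h₁ h₂ ξ₁ ξ₂ z * BKfun u σ z) = 0
        ↔ (wDz (fun w => (h₁ w : ℂ)) z + (h₂ z : ℂ) * σ z = 0 ∧
           wDz (fun w => (h₂ w : ℂ)) z - (h₁ z : ℂ) * σ z = 0)) := by
    intro z hz
    have hdu := hu z hz
    have hdh₁ := hh₁ z hz
    have hdh₂ := hh₂ z hz
    have hdξ₁ := hξ₁ z hz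
    have hdξ₂ := hξ₂ z hz
    -- abbreviations
    set c : ℂ := (((Real.sqrt 2 : ℝ)) : ℂ)⁻¹ with hc
    set Ep : ℂ := ((Real.exp (u z) : ℝ) : ℂ) with hEp
    set Em : ℂ := ((Real.exp (-u z) : ℝ) : ℂ) with hEm
    set ω : ℂ := wDzBar (fun w => (u w : ℂ)) z with hω
    set s : ℂ := (starRingEnd ℂ) (σ z) with hs
    set H1 : ℂ := wDz (fun w => (h₁ w : ℂ)) z with hH1
    set H2 : ℂ := wDz (fun w => (h₂ w : ℂ)) z with hH2
    set P1 : ℂ := H1 + (h₂ z : ℂ) * σ z with hP1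
    set P2 : ℂ := H2 - (h₁ z : ℂ) * σ z with hP2
    -- the r-function
    have hrEq : (fun w => ((Real.exp (u w) / Real.sqrt 2 : ℝ) : ℂ))
        = fun w => ((Real.exp (u w) : ℝ) : ℂ) * (((Real.sqrt 2 : ℝ)) : ℂ)⁻¹ := by
      funext w; push_cast; rw [div_eq_mul_inv]
    have hdr : DifferentiableAt ℝ (fun w => ((Real.exp (u w) / Real.sqrt 2 : ℝ) : ℂ)) z := by
      rw [hrEq]; exact (exp_ofReal_diff u z hdu).mul_const _
    have dR : wDzBar (fun w => ((Real.exp (u w) / Real.sqrt 2 : ℝ) : ℂ)) z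
        = Ep * ω * c := by
      rw [hrEq, wDzBar_mul_const _ _ z (exp_ofReal_diff u z hdu), wDzBar_exp_ofReal u z hdu]
    -- the matrix computation
    have h1 : wDzBar (APfun u h₁ h₂ ξ₁ ξ₂) z
        = Ap (wDzBar (fun w => ((Real.exp (u w) / Real.sqrt 2 : ℝ) : ℂ)) z)
            (wDzBar (aCoef u ξ₁ h₁) z) (wDzBar (aCoef u ξ₂ h₂) z)
            (wDzBar (bCoef u ξ₁ h₁) z) (wDzBar (bCoef u ξ₂ h₂) z) :=
      wDzBar_Ap _ _ _ _ _ z hdr (aCoef_diff u ξ₁ h₁ z hdu hdξ₁ hdh₁)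
        (aCoef_diff u ξ₂ h₂ z hdu hdξ₂ hdh₂) (bCoef_diff u ξ₁ h₁ z hdu hdξ₁ hdh₁)
        (bCoef_diff u ξ₂ h₂ z hdu hdξ₂ hdh₂)
    have hline : wDzBar (APfun u h₁ h₂ ξ₁ ξ₂) z
          + (BKfun u σ z * APfun u h₁ h₂ ξ₁ ξ₂ z - APfun u h₁ h₂ ξ₁ ξ₂ z * BKfun u σ z)
        = Ap (wDzBar (fun w => ((Real.exp (u w) / Real.sqrt 2 : ℝ) : ℂ)) z
                - ((Real.exp (u z) / Real.sqrt 2 : ℝ) : ℂ) * ω)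
            (wDzBar (aCoef u ξ₁ h₁) z + ω * bCoef u ξ₁ h₁ z + s * aCoef u ξ₂ h₂ z)
            (wDzBar (aCoef u ξ₂ h₂) z + ω * bCoef u ξ₂ h₂ z - s * aCoef u ξ₁ h₁ z)
            (wDzBar (bCoef u ξ₁ h₁) z + ω * aCoef u ξ₁ h₁ z + s * bCoef u ξ₂ h₂ z)
            (wDzBar (bCoef u ξ₂ h₂) z + ω * aCoef u ξ₂ h₂ z - s * bCoef u ξ₁ h₁ z) := by
      rw [h1]
      exact key_matrix _ _ _ _ _ _ _ _ _ _ _ _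
    rw [hline, Ap_eq_zero_iff]
    -- scalar facts
    have hEp0 : Ep ≠ 0 := by
      rw [hEp]; exact_mod_cast Real.exp_ne_zero (u z)
    have hc0 : c ≠ 0 := by
      rw [hc]
      apply inv_ne_zero
      exact_mod_cast Real.sqrt_ne_zero'.mpr (by norm_num)
    have hEmEp : Em * Ep = 1 := by
      rw [hEm, hEp]
      have : Real.exp (-u z) * Real.exp (u z) = 1 := by
        rw [← Real.exp_add]; simp
      exact_mod_cast this
    have hrz : ((Real.exp (u z) / Real.sqrt 2 : ℝ) : ℂ) = Ep * c := by
      rw [hEp, hc]; push_cast; rw [div_eq_mul_inv]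
    have htriv : wDzBar (fun w => ((Real.exp (u w) / Real.sqrt 2 : ℝ) : ℂ)) z
        - ((Real.exp (u z) / Real.sqrt 2 : ℝ) : ℂ) * ω = 0 := by
      rw [dR, hrz]; ring
    have hcod1 : Ep ^ 2 * P1 = wDzBar ξ₁ z + ξ₂ z * s := by
      have h2u : ((Real.exp (2 * u z) : ℝ) : ℂ) = Ep ^ 2 := by
        rw [hEp]
        have : Real.exp (2 * u z) = Real.exp (u z) ^ 2 := by
          rw [two_mul, Real.exp_add]; ring
        rw [this]; push_cast; ring
      have := codazzi₁ z hz
      rw [h2u] at this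
      exact this
    have hcod2 : Ep ^ 2 * P2 = wDzBar ξ₂ z - ξ₁ z * s := by
      have h2u : ((Real.exp (2 * u z) : ℝ) : ℂ) = Ep ^ 2 := by
        rw [hEp]
        have : Real.exp (2 * u z) = Real.exp (u z) ^ 2 := by
          rw [two_mul, Real.exp_add]; ring
        rw [this]; push_cast; ring
      have := codazzi₂ z hz
      rw [h2u] at this
      exact this
    have hconj1 : (starRingEnd ℂ) P1 = (starRingEnd ℂ) H1 + (h₂ z : ℂ) * s := by
      rw [hP1, map_add, _root_.map_mul, Complex.conj_ofReal, hs]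
    have hconj2 : (starRingEnd ℂ) P2 = (starRingEnd ℂ) H2 - (h₁ z : ℂ) * s := by
      rw [hP2, map_sub, _root_.map_mul, Complex.conj_ofReal, hs]
    -- entry values
    have ha1z : aCoef u ξ₁ h₁ z = (Em * ξ₁ z + Ep * (h₁ z : ℂ)) * c := by
      rw [aCoef_eq]
    have ha2z : aCoef u ξ₂ h₂ z = (Em * ξ₂ z + Ep * (h₂ z : ℂ)) * c := by
      rw [aCoef_eq]
    have hb1z : bCoef u ξ₁ h₁ z = (Em * ξ₁ z - Ep * (h₁ z : ℂ)) * c := by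
      rw [bCoef_eq]
    have hb2z : bCoef u ξ₂ h₂ z = (Em * ξ₂ z - Ep * (h₂ z : ℂ)) * c := by
      rw [bCoef_eq]
    have he1 : wDzBar (aCoef u ξ₁ h₁) z + ω * bCoef u ξ₁ h₁ z + s * aCoef u ξ₂ h₂ z
        = c * Ep * (P1 + (starRingEnd ℂ) P1) := by
      rw [wDzBar_aCoef u ξ₁ h₁ z hdu hdξ₁ hdh₁, hb1z, ha2z, ← hEp, ← hEm, ← hω, ← hH1, ← hc]
      linear_combination (-(c * Em)) * hcod1 + (c * Ep * P1) * hEmEp + (-(c * Ep)) * hconj1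
    have hf1 : wDzBar (bCoef u ξ₁ h₁) z + ω * aCoef u ξ₁ h₁ z + s * bCoef u ξ₂ h₂ z
        = c * Ep * (P1 - (starRingEnd ℂ) P1) := by
      rw [wDzBar_bCoef u ξ₁ h₁ z hdu hdξ₁ hdh₁, ha1z, hb2z, ← hEp, ← hEm, ← hω, ← hH1, ← hc]
      linear_combination (-(c * Em)) * hcod1 + (c * Ep * P1) * hEmEp + (c * Ep) * hconj1
    have he2 : wDzBar (aCoef u ξ₂ h₂) z + ω * bCoef u ξ₂ h₂ z - s * aCoef u ξ₁ h₁ z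
        = c * Ep * (P2 + (starRingEnd ℂ) P2) := by
      rw [wDzBar_aCoef u ξ₂ h₂ z hdu hdξ₂ hdh₂, hb2z, ha1z, ← hEp, ← hEm, ← hω, ← hH2, ← hc]
      linear_combination (-(c * Em)) * hcod2 + (c * Ep * P2) * hEmEp + (-(c * Ep)) * hconj2
    have hf2 : wDzBar (bCoef u ξ₂ h₂) z + ω * aCoef u ξ₂ h₂ z - s * bCoef u ξ₁ h₁ z
        = c * Ep * (P2 - (starRingEnd ℂ) P2) := by
      rw [wDzBar_bCoef u ξ₂ h₂ z hdu hdξ₂ hdh₂, ha2z, hb1z, ← hEp, ← hEm, ← hω, ← hH2, ← hc]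
      linear_combination (-(c * Em)) * hcod2 + (c * Ep * P2) * hEmEp + (c * Ep) * hconj2
    rw [he1, hf1, he2, hf2]
    have hcEp : c * Ep ≠ 0 := mul_ne_zero hc0 hEp0
    constructor
    · rintro ⟨-, hA, hB, hC, hD⟩
      have h1' : P1 + (starRingEnd ℂ) P1 = 0 := by
        rcases mul_eq_zero.mp hA with h | h
        · exact absurd h hcEp
        · exact h
      have h3' : P1 - (starRingEnd ℂ) P1 = 0 := by
        rcases mul_eq_zero.mp hC with h | h
        · exact absurd h hcEp
        · exact h
      have h2' : P2 + (starRingEnd ℂ) P2 = 0 := by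
        rcases mul_eq_zero.mp hB with h | h
        · exact absurd h hcEp
        · exact h
      have h4' : P2 - (starRingEnd ℂ) P2 = 0 := by
        rcases mul_eq_zero.mp hD with h | h
        · exact absurd h hcEp
        · exact h
      constructor
      · linear_combination (h1' + h3') / 2
      · linear_combination (h2' + h4') / 2
    · rintro ⟨hP1', hP2'⟩
      have hQ1 : (starRingEnd ℂ) P1 = 0 := by rw [hP1', map_zero]
      have hQ2 : (starRingEnd ℂ) P2 = 0 := by rw [hP2', map_zero]
      refine ⟨htriv, ?_, ?_, ?_, ?_⟩ <;> simp [hP1', hP2', hQ1, hQ2]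
  constructor
  · intro H z hz; exact (key z hz).mp (H z hz)
  · intro H z hz; exact (key z hz).mpr (H z hz)
end
end

section
/- Let r ∈ ℝ and a₁, a₂, b₁, b₂ ∈ ℂ satisfy Im(a₁) = Im(b₁) and Im(a₂) = Im(b₂). Let A := A_p(r, a₁, a₂, b₁, b₂) and let B be the entrywise complex conjugate of A. Then every entry of the commutator A·B − B·A vanishes except possibly the entries at positions (1,2), (2,1), (3,4), (4,3); that is, the 𝔭-component of [A, B] in the reductive splitting 𝔰𝔬₅ = 𝔨 ⊕ 𝔭 (where 𝔨 consists of matrices supported on the positions (1,2), (2,1), (3,4), (4,3)) is zero. (This is the special algebraic property [α′_𝔭 ∧ α″_𝔭]_𝔭 = 0 enjoyed by frames of Gauss maps of conformal immersions into S⁴.) -/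
open Complex Matrix

noncomputable section

attribute [local instance] Matrix.normedAddCommGroup Matrix.normedSpace

set_option maxHeartbeats 2000000 in
/-- the special property [α'_𝔭 ∧ α''_𝔭]_𝔭 = 0 of Gauss-map frames:
the commutator of A_𝔭 with its entrywise conjugate is supported on the
𝔨-positions (1,2), (2,1), (3,4), (4,3). -/
theorem commutator_Ap_conj_p_part_vanishes
    (r : ℝ) (a₁ a₂ b₁ b₂ : ℂ)
    (h₁ : a₁.im = b₁.im) (h₂ : a₂.im = b₂.im)
    (A B : Matrix (Fin 5) (Fin 5) ℂ)
    (hA : A = Ap (r : ℂ) a₁ a₂ b₁ b₂)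
    (hB : B = A.map (starRingEnd ℂ)) :
    ∀ i j : Fin 5,
      ((i, j) : Fin 5 × Fin 5) ≠ (1, 2) → ((i, j) : Fin 5 × Fin 5) ≠ (2, 1) →
      ((i, j) : Fin 5 × Fin 5) ≠ (3, 4) → ((i, j) : Fin 5 × Fin 5) ≠ (4, 3) →
      (A * B - B * A) i j = 0 := by
  subst hA hB
  intro i j hk₁ hk₂ hk₃ hk₄
  fin_cases i <;> fin_cases j <;>
  first
  | exact absurd rfl hk₁
  | exact absurd rfl hk₂
  | exact absurd rfl hk₃
  | exact absurd rfl hk₄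
  | (simp only [Ap, Matrix.mul_apply, Matrix.map_apply, Fin.sum_univ_five, Matrix.cons_val',
      Matrix.cons_val_zero, Matrix.cons_val_one, Matrix.head_cons, Matrix.empty_val',
      Matrix.cons_val_fin_one, Matrix.head_fin_const, Matrix.sub_apply, Fin.isValue,
      Matrix.cons_val_two, Matrix.tail_cons, Matrix.cons_val_three, Matrix.cons_val_four,
      Matrix.vecHead, Matrix.vecTail, Function.comp, _root_.map_mul, _root_.map_neg,
      Complex.conj_I, Complex.conj_ofReal]
     simp [Complex.ext_iff, ← h₁, ← h₂, Matrix.vecHead, Matrix.vecTail, Function.comp]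
     try ring_nf)
end
end

section
/- Let U ⊆ ℂ be open and let A_p, B_p, A_k, B_k : ℂ → Matrix (Fin 5) (Fin 5) ℂ be ℝ-differentiable on U. Then the following are equivalent: (i) on U one has ∂̄A_p + (B_k·A_p − A_p·B_k) = 0, ∂B_p + (A_k·B_p − B_p·A_k) = 0, and ∂̄A_k − ∂B_k = (A_k·B_k − B_k·A_k) + (A_p·B_p − B_p·A_p); (ii) for every λ ∈ ℂ with |λ| = 1, the matrices A_λ := λ⁻¹·A_p + A_k and B_λ := λ·B_p + B_k satisfy the zero-curvature (flatness) equation ∂̄A_λ − ∂B_λ = A_λ·B_λ − B_λ·A_λ on U. (This expresses that the normal-harmonic map equation for Gauss maps, together with the Maurer–Cartan structure equations, is equivalent to a loop of zero-curvature equations, i.e. complete integrability.) -/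
open Complex Matrix

noncomputable section

attribute [local instance] Matrix.normedAddCommGroup Matrix.normedSpace

lemma wDzBar_combo (c : ℂ) (f g : ℂ → Matrix (Fin 5) (Fin 5) ℂ) (z : ℂ)
    (hf : DifferentiableAt ℝ f z) (hg : DifferentiableAt ℝ g z) :
    wDzBar (fun w => c • f w + g w) z = c • wDzBar f z + wDzBar g z := by
  unfold wDzBar
  rw [fderiv_fun_add (f := fun w => c • f w) (hf.const_smul c) hg, fderiv_fun_const_smul hf c]
  simp only [ContinuousLinearMap.add_apply, ContinuousLinearMap.coe_smul', Pi.smul_apply]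
  module

lemma wDz_combo (c : ℂ) (f g : ℂ → Matrix (Fin 5) (Fin 5) ℂ) (z : ℂ)
    (hf : DifferentiableAt ℝ f z) (hg : DifferentiableAt ℝ g z) :
    wDz (fun w => c • f w + g w) z = c • wDz f z + wDz g z := by
  unfold wDz
  rw [fderiv_fun_add (f := fun w => c • f w) (hf.const_smul c) hg, fderiv_fun_const_smul hf c]
  simp only [ContinuousLinearMap.add_apply, ContinuousLinearMap.coe_smul', Pi.smul_apply]
  module

lemma key_algebra (lam : ℂ) (hl : lam ≠ 0) (a b c d P Q K L : Matrix (Fin 5) (Fin 5) ℂ) :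
    lam⁻¹ • a + c - (lam • b + d)
      - ((lam⁻¹ • P + K) * (lam • Q + L) - (lam • Q + L) * (lam⁻¹ • P + K))
    = lam⁻¹ • (a + (L * P - P * L)) - lam • (b + (K * Q - Q * K))
      + (c - d - ((K * L - L * K) + (P * Q - Q * P))) := by
  have h1 : lam⁻¹ * lam = 1 := inv_mul_cancel₀ hl
  have h2 : lam * lam⁻¹ = 1 := mul_inv_cancel₀ hl
  simp only [add_mul, mul_add, smul_mul_assoc, mul_smul_comm, smul_smul, h1, h2, one_smul,
    smul_add, smul_sub]
  abel

/-- complete integrability: the harmonic map equation together with the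
Maurer–Cartan structure equations holds iff the loop of connections
d + λ⁻¹α'_𝔭 + α_𝔨 + λα''_𝔭 is flat for every λ ∈ S¹. -/
theorem harmonicity_iff_loop_of_zero_curvature
    (U : Set ℂ) (hU : IsOpen U)
    (Ap' Bp' Ak' Bk' : ℂ → Matrix (Fin 5) (Fin 5) ℂ)
    (hAp : ∀ z ∈ U, DifferentiableAt ℝ Ap' z)
    (hBp : ∀ z ∈ U, DifferentiableAt ℝ Bp' z)
    (hAk : ∀ z ∈ U, DifferentiableAt ℝ Ak' z)
    (hBk : ∀ z ∈ U, DifferentiableAt ℝ Bk' z) :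
    ((∀ z ∈ U, wDzBar Ap' z + (Bk' z * Ap' z - Ap' z * Bk' z) = 0) ∧
     (∀ z ∈ U, wDz Bp' z + (Ak' z * Bp' z - Bp' z * Ak' z) = 0) ∧
     (∀ z ∈ U, wDzBar Ak' z - wDz Bk' z
        = (Ak' z * Bk' z - Bk' z * Ak' z) + (Ap' z * Bp' z - Bp' z * Ap' z)))
    ↔ (∀ lam : ℂ, ‖lam‖ = 1 → ∀ z ∈ U,
        wDzBar (fun w => lam⁻¹ • Ap' w + Ak' w) z
          - wDz (fun w => lam • Bp' w + Bk' w) z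
        = (lam⁻¹ • Ap' z + Ak' z) * (lam • Bp' z + Bk' z)
          - (lam • Bp' z + Bk' z) * (lam⁻¹ • Ap' z + Ak' z)) := by
  have habs : ∀ lam : ℂ, ‖lam‖ = 1 → lam ≠ 0 := by
    intro lam h h0; simp [h0] at h
  constructor
  · rintro ⟨h1, h2, h3⟩ lam hlam z hz
    have hl := habs lam hlam
    rw [wDzBar_combo lam⁻¹ Ap' Ak' z (hAp z hz) (hAk z hz),
        wDz_combo lam Bp' Bk' z (hBp z hz) (hBk z hz), ← sub_eq_zero,
        key_algebra lam hl]
    rw [h1 z hz, h2 z hz, sub_eq_zero_of_eq (h3 z hz)]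
    simp
  · intro h
    have main : ∀ z ∈ U,
        (wDzBar Ap' z + (Bk' z * Ap' z - Ap' z * Bk' z) = 0) ∧
        (wDz Bp' z + (Ak' z * Bp' z - Bp' z * Ak' z) = 0) ∧
        (wDzBar Ak' z - wDz Bk' z
          = (Ak' z * Bk' z - Bk' z * Ak' z) + (Ap' z * Bp' z - Bp' z * Ap' z)) := by
      intro z hz
      set X := wDzBar Ap' z + (Bk' z * Ap' z - Ap' z * Bk' z) with hXdef
      set Y := wDz Bp' z + (Ak' z * Bp' z - Bp' z * Ak' z) with hYdef
      set Z := wDzBar Ak' z - wDz Bk' z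
        - ((Ak' z * Bk' z - Bk' z * Ak' z) + (Ap' z * Bp' z - Bp' z * Ap' z)) with hZdef
      have e : ∀ lam : ℂ, ‖lam‖ = 1 → lam⁻¹ • X - lam • Y + Z = 0 := by
        intro lam hlam
        have hE := h lam hlam z hz
        rw [wDzBar_combo lam⁻¹ Ap' Ak' z (hAp z hz) (hAk z hz),
            wDz_combo lam Bp' Bk' z (hBp z hz) (hBk z hz), ← sub_eq_zero,
            key_algebra lam (habs lam hlam)] at hE
        exact hE
      have e1 := e 1 (by simp)
      have em1 := e (-1) (by simp)
      have ei := e Complex.I (by simp)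
      simp only [inv_one, one_smul, inv_neg, neg_smul, Complex.inv_I, neg_neg,
        sub_neg_eq_add] at e1 em1 ei
      -- e1 : X - Y + Z = 0
      -- em1 : -X + Y + Z = 0
      -- ei : -(I • X) - I • Y + Z = 0
      have hZ : Z = 0 := by
        have hsum : (2 : ℂ) • Z = 0 := by
          calc (2 : ℂ) • Z = (X - Y + Z) + (-X + Y + Z) := by module
            _ = 0 + 0 := by rw [e1, em1]
            _ = 0 := by simp
        exact (smul_eq_zero.mp hsum).resolve_left two_ne_zero
      rw [hZ, add_zero] at e1 ei
      have hXY : X = Y := by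
        have := sub_eq_zero.mp e1; exact this
      have hXpY : X + Y = 0 := by
        have hi : Complex.I • (X + Y) = 0 := by
          calc Complex.I • (X + Y) = -(-(Complex.I • X) - Complex.I • Y) := by module
            _ = 0 := by rw [ei, neg_zero]
        exact (smul_eq_zero.mp hi).resolve_left Complex.I_ne_zero
      have hX : X = 0 := by
        have h2X : (2 : ℂ) • X = 0 := by
          calc (2 : ℂ) • X = X + Y := by rw [← hXY]; module
            _ = 0 := hXpY
        exact (smul_eq_zero.mp h2X).resolve_left two_ne_zero
      have hY : Y = 0 := hXY ▸ hX
      exact ⟨hX, hY, sub_eq_zero.mp hZ⟩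
    exact ⟨fun z hz => (main z hz).1, fun z hz => (main z hz).2.1,
      fun z hz => (main z hz).2.2⟩
end
end

section
/- Let U ⊆ ℂ be open, let u, h₁, h₂ : ℂ → ℝ and ξ₁, ξ₂, σ : ℂ → ℂ be ℝ-differentiable on U, and set aᵢ := (e^{−u}·ξᵢ + e^{u}·hᵢ)/√2 and bᵢ := (e^{−u}·ξᵢ − e^{u}·hᵢ)/√2 for i = 1,2. Assume the Codazzi equations hold on U: e^{2u}·(∂h₁ + h₂·σ) = ∂̄ξ₁ + ξ₂·conj(σ) and e^{2u}·(∂h₂ − h₁·σ) = ∂̄ξ₂ − ξ₁·conj(σ). Then on U: ∂̄a₁ + (∂̄u)·b₁ + a₂·conj(σ) = (e^{u}/√2)·(∂h₁ + ∂̄h₁ + h₂·(σ + conj(σ))); ∂̄a₂ + (∂̄u)·b₂ − a₁·conj(σ) = (e^{u}/√2)·(∂h₂ + ∂̄h₂ − h₁·(σ + conj(σ))); ∂̄b₁ + (∂̄u)·a₁ + b₂·conj(σ) = (e^{u}/√2)·(∂h₁ − ∂̄h₁ + h₂·(σ − conj(σ))); and ∂̄b₂ + (∂̄u)·a₂ −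 b₁·conj(σ) = (e^{u}/√2)·(∂h₂ − ∂̄h₂ − h₁·(σ − conj(σ))). -/
open Complex Matrix

noncomputable section

attribute [local instance] Matrix.normedAddCommGroup Matrix.normedSpace

namespace WHelp

variable {f g : ℂ → ℂ} {z : ℂ}

lemma wDzBar_add (hf : DifferentiableAt ℝ f z) (hg : DifferentiableAt ℝ g z) :
    wDzBar (fun w => f w + g w) z = wDzBar f z + wDzBar g z := by
  simp only [wDzBar, fderiv_fun_add hf hg, ContinuousLinearMap.add_apply, smul_eq_mul]
  ring

lemma wDzBar_sub (hf : DifferentiableAt ℝ f z) (hg : DifferentiableAt ℝ g z) :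
    wDzBar (fun w => f w - g w) z = wDzBar f z - wDzBar g z := by
  simp only [wDzBar, fderiv_fun_sub hf hg, ContinuousLinearMap.sub_apply, smul_eq_mul]
  ring

lemma wDzBar_neg : wDzBar (fun w => -(f w)) z = -wDzBar f z := by
  simp only [wDzBar, fderiv_fun_neg, ContinuousLinearMap.neg_apply, smul_eq_mul]
  ring

lemma wDzBar_div_const (hf : DifferentiableAt ℝ f z) (c : ℂ) :
    wDzBar (fun w => f w / c) z = wDzBar f z / c := by
  simp only [div_eq_mul_inv, wDzBar, fderiv_mul_const hf,
    ContinuousLinearMap.smul_apply, smul_eq_mul]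
  ring

lemma wDzBar_exp_mul (hf : DifferentiableAt ℝ f z) (hg : DifferentiableAt ℝ g z) :
    wDzBar (fun w => Complex.exp (f w) * g w) z
      = Complex.exp (f z) * (wDzBar f z * g z + wDzBar g z) := by
  have hfe : DifferentiableAt ℝ (fun w => Complex.exp (f w)) z := hf.cexp
  simp only [wDzBar, fderiv_fun_mul hfe hg, (hf.hasFDerivAt.cexp).fderiv,
    ContinuousLinearMap.add_apply, ContinuousLinearMap.smul_apply, smul_eq_mul]
  ring

end WHelp

namespace WHelp

lemma wDzBar_aCoef (u : ℂ → ℝ) (ξ : ℂ → ℂ) (h : ℂ → ℝ) (z : ℂ)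
    (hu : DifferentiableAt ℝ (fun w => (u w : ℂ)) z)
    (hξ : DifferentiableAt ℝ ξ z)
    (hh : DifferentiableAt ℝ (fun w => (h w : ℂ)) z) :
    wDzBar (aCoef u ξ h) z
      = (Complex.exp (-(u z : ℂ)) * (wDzBar ξ z - wDzBar (fun w => (u w : ℂ)) z * ξ z)
        + Complex.exp ((u z : ℂ)) * (wDzBar (fun w => (u w : ℂ)) z * (h z : ℂ)
            + wDzBar (fun w => (h w : ℂ)) z)) / ((Real.sqrt 2 : ℝ) : ℂ) := by
  have hfun : aCoef u ξ h = fun w =>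
      (Complex.exp (-((u w : ℂ))) * ξ w + Complex.exp ((u w : ℂ)) * (h w : ℂ))
        / ((Real.sqrt 2 : ℝ) : ℂ) := by
    funext w; simp [aCoef, Complex.ofReal_exp]
  have hneg : DifferentiableAt ℝ (fun w => -((u w : ℂ))) z := hu.neg
  have h1 : DifferentiableAt ℝ (fun w => Complex.exp (-((u w : ℂ))) * ξ w) z :=
    hneg.cexp.mul hξ
  have h2 : DifferentiableAt ℝ (fun w => Complex.exp ((u w : ℂ)) * (h w : ℂ)) z :=
    hu.cexp.mul hh
  rw [hfun, wDzBar_div_const (h1.fun_add h2), wDzBar_add h1 h2,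
    wDzBar_exp_mul hneg hξ, wDzBar_exp_mul hu hh, wDzBar_neg]
  ring

lemma wDzBar_bCoef (u : ℂ → ℝ) (ξ : ℂ → ℂ) (h : ℂ → ℝ) (z : ℂ)
    (hu : DifferentiableAt ℝ (fun w => (u w : ℂ)) z)
    (hξ : DifferentiableAt ℝ ξ z)
    (hh : DifferentiableAt ℝ (fun w => (h w : ℂ)) z) :
    wDzBar (bCoef u ξ h) z
      = (Complex.exp (-(u z : ℂ)) * (wDzBar ξ z - wDzBar (fun w => (u w : ℂ)) z * ξ z)
        - Complex.exp ((u z : ℂ)) * (wDzBar (fun w => (u w : ℂ)) z * (h z : ℂ)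
            + wDzBar (fun w => (h w : ℂ)) z)) / ((Real.sqrt 2 : ℝ) : ℂ) := by
  have hfun : bCoef u ξ h = fun w =>
      (Complex.exp (-((u w : ℂ))) * ξ w - Complex.exp ((u w : ℂ)) * (h w : ℂ))
        / ((Real.sqrt 2 : ℝ) : ℂ) := by
    funext w; simp [bCoef, Complex.ofReal_exp]
  have hneg : DifferentiableAt ℝ (fun w => -((u w : ℂ))) z := hu.neg
  have h1 : DifferentiableAt ℝ (fun w => Complex.exp (-((u w : ℂ))) * ξ w) z :=
    hneg.cexp.mul hξ
  have h2 : DifferentiableAt ℝ (fun w => Complex.exp ((u w : ℂ)) * (h w : ℂ)) z :=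
    hu.cexp.mul hh
  rw [hfun, wDzBar_div_const (h1.fun_sub h2), wDzBar_sub h1 h2,
    wDzBar_exp_mul hneg hξ, wDzBar_exp_mul hu hh, wDzBar_neg]
  ring

end WHelp

/-- using the Codazzi equations, the tension coefficients
A₁, A₂, B₁, B₂ can be rewritten purely in terms of the mean curvature
components h₁, h₂ and the normal connection coefficient σ. -/
theorem tension_coefficients_via_codazzi
    (U : Set ℂ) (hU : IsOpen U)
    (u h₁ h₂ : ℂ → ℝ) (ξ₁ ξ₂ σ : ℂ → ℂ)
    (hu : ∀ z ∈ U, DifferentiableAt ℝ (fun w => (u w : ℂ)) z)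
    (hh₁ : ∀ z ∈ U, DifferentiableAt ℝ (fun w => (h₁ w : ℂ)) z)
    (hh₂ : ∀ z ∈ U, DifferentiableAt ℝ (fun w => (h₂ w : ℂ)) z)
    (hξ₁ : ∀ z ∈ U, DifferentiableAt ℝ ξ₁ z)
    (hξ₂ : ∀ z ∈ U, DifferentiableAt ℝ ξ₂ z)
    (hσ : ∀ z ∈ U, DifferentiableAt ℝ σ z)
    (codazzi₁ : ∀ z ∈ U,
      (Real.exp (2 * u z) : ℂ) * (wDz (fun w => (h₁ w : ℂ)) z + (h₂ z : ℂ) * σ z)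
        = wDzBar ξ₁ z + ξ₂ z * (starRingEnd ℂ) (σ z))
    (codazzi₂ : ∀ z ∈ U,
      (Real.exp (2 * u z) : ℂ) * (wDz (fun w => (h₂ w : ℂ)) z - (h₁ z : ℂ) * σ z)
        = wDzBar ξ₂ z - ξ₁ z * (starRingEnd ℂ) (σ z)) :
    ∀ z ∈ U,
      (wDzBar (aCoef u ξ₁ h₁) z + wDzBar (fun w => (u w : ℂ)) z * bCoef u ξ₁ h₁ z
          + aCoef u ξ₂ h₂ z * (starRingEnd ℂ) (σ z)
        = ((Real.exp (u z) / Real.sqrt 2 : ℝ) : ℂ)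
            * (wDz (fun w => (h₁ w : ℂ)) z + wDzBar (fun w => (h₁ w : ℂ)) z
               + (h₂ z : ℂ) * (σ z + (starRingEnd ℂ) (σ z)))) ∧
      (wDzBar (aCoef u ξ₂ h₂) z + wDzBar (fun w => (u w : ℂ)) z * bCoef u ξ₂ h₂ z
          - aCoef u ξ₁ h₁ z * (starRingEnd ℂ) (σ z)
        = ((Real.exp (u z) / Real.sqrt 2 : ℝ) : ℂ)
            * (wDz (fun w => (h₂ w : ℂ)) z + wDzBar (fun w => (h₂ w : ℂ)) z
               - (h₁ z : ℂ) * (σ z + (starRingEnd ℂ) (σ z)))) ∧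
      (wDzBar (bCoef u ξ₁ h₁) z + wDzBar (fun w => (u w : ℂ)) z * aCoef u ξ₁ h₁ z
          + bCoef u ξ₂ h₂ z * (starRingEnd ℂ) (σ z)
        = ((Real.exp (u z) / Real.sqrt 2 : ℝ) : ℂ)
            * (wDz (fun w => (h₁ w : ℂ)) z - wDzBar (fun w => (h₁ w : ℂ)) z
               + (h₂ z : ℂ) * (σ z - (starRingEnd ℂ) (σ z)))) ∧
      (wDzBar (bCoef u ξ₂ h₂) z + wDzBar (fun w => (u w : ℂ)) z * aCoef u ξ₂ h₂ z
          - bCoef u ξ₁ h₁ z * (starRingEnd ℂ) (σ z)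
        = ((Real.exp (u z) / Real.sqrt 2 : ℝ) : ℂ)
            * (wDz (fun w => (h₂ w : ℂ)) z - wDzBar (fun w => (h₂ w : ℂ)) z
               - (h₁ z : ℂ) * (σ z - (starRingEnd ℂ) (σ z)))) := by
  
  intro z hz
  have hu' := hu z hz
  have hE2 : ((Real.exp (2 * u z) : ℝ) : ℂ)
      = Complex.exp ((u z : ℂ)) * Complex.exp ((u z : ℂ)) := by
    rw [Complex.ofReal_exp, ← Complex.exp_add]
    push_cast
    ring_nf
  have hFE : Complex.exp (-(u z : ℂ)) * Complex.exp ((u z : ℂ)) = 1 := by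
    rw [← Complex.exp_add]; simp
  have hc₁ := codazzi₁ z hz
  have hc₂ := codazzi₂ z hz
  rw [hE2] at hc₁ hc₂
  have ha₁ := WHelp.wDzBar_aCoef u ξ₁ h₁ z hu' (hξ₁ z hz) (hh₁ z hz)
  have ha₂ := WHelp.wDzBar_aCoef u ξ₂ h₂ z hu' (hξ₂ z hz) (hh₂ z hz)
  have hb₁ := WHelp.wDzBar_bCoef u ξ₁ h₁ z hu' (hξ₁ z hz) (hh₁ z hz)
  have hb₂ := WHelp.wDzBar_bCoef u ξ₂ h₂ z hu' (hξ₂ z hz) (hh₂ z hz)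
  refine ⟨?_, ?_, ?_, ?_⟩
  · rw [ha₁]
    simp only [aCoef, bCoef]
    push_cast [Complex.ofReal_exp]
    linear_combination (-(Complex.exp (-(u z : ℂ))) / ((Real.sqrt 2 : ℝ) : ℂ)) * hc₁
      + (Complex.exp ((u z : ℂ)) * (wDz (fun w => (h₁ w : ℂ)) z + (h₂ z : ℂ) * σ z)
          / ((Real.sqrt 2 : ℝ) : ℂ)) * hFE
  · rw [ha₂]
    simp only [aCoef, bCoef]
    push_cast [Complex.ofReal_exp]
    linear_combination (-(Complex.exp (-(u z : ℂ))) / ((Real.sqrt 2 : ℝ) : ℂ)) * hc₂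
      + (Complex.exp ((u z : ℂ)) * (wDz (fun w => (h₂ w : ℂ)) z - (h₁ z : ℂ) * σ z)
          / ((Real.sqrt 2 : ℝ) : ℂ)) * hFE
  · rw [hb₁]
    simp only [aCoef, bCoef]
    push_cast [Complex.ofReal_exp]
    linear_combination (-(Complex.exp (-(u z : ℂ))) / ((Real.sqrt 2 : ℝ) : ℂ)) * hc₁
      + (Complex.exp ((u z : ℂ)) * (wDz (fun w => (h₁ w : ℂ)) z + (h₂ z : ℂ) * σ z)
          / ((Real.sqrt 2 : ℝ) : ℂ)) * hFE
  · rw [hb₂]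
    simp only [aCoef, bCoef]
    push_cast [Complex.ofReal_exp]
    linear_combination (-(Complex.exp (-(u z : ℂ))) / ((Real.sqrt 2 : ℝ) : ℂ)) * hc₂
      + (Complex.exp ((u z : ℂ)) * (wDz (fun w => (h₂ w : ℂ)) z - (h₁ z : ℂ) * σ z)
          / ((Real.sqrt 2 : ℝ) : ℂ)) * hFE
end
end

section
/- Let U ⊆ ℂ be open, u : ℂ → ℝ, and λ ∈ ℂ with |λ| = 1. Let F : ℂ → Matrix (Fin 5) (Fin 5) ℝ satisfy F(z)ᵀ·F(z) = 1 for all z ∈ U, denote by F₀, F₁, F₂ the columns of F regarded as maps into ℂ⁵ (Fin 5 → ℂ), and suppose f := F₀ is ℝ-differentiable on U with Wirtinger derivative ∂f(z) = λ⁻¹·(e^{u(z)}/√2)·(F₁(z) − i·F₂(z)) for all z ∈ U. Then for every z ∈ U: Σᵢ (∂f(z))ᵢ² = 0 and Σᵢ (∂f(z))ᵢ·conj((∂f(z))ᵢ) = e^{2u(z)}. (This shows that every member f_λ of the associated family of an immersion with normal-harmonic Gauss map is conformal with the same conformal factor e^{2u}.) -/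
open Complex Matrix

noncomputable section

attribute [local instance] Matrix.normedAddCommGroup Matrix.normedSpace

/-- The j-th column of a real-matrix-valued map, regarded as a map into ℂ⁵. -/
def col (F : ℂ → Matrix (Fin 5) (Fin 5) ℝ) (j : Fin 5) : ℂ → Fin 5 → ℂ :=
  fun z i => ((F z i j : ℝ) : ℂ)

/-- every member f_λ of the associated family is conformal with the
same conformal factor e^{2u}. -/
theorem associated_family_conformal
    (U : Set ℂ) (hU : IsOpen U) (u : ℂ → ℝ)
    (lam : ℂ) (hlam : ‖lam‖ = 1)
    (F : ℂ → Matrix (Fin 5) (Fin 5) ℝ)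
    (horth : ∀ z ∈ U, (F z)ᵀ * F z = 1)
    (hdiff : ∀ z ∈ U, DifferentiableAt ℝ (_root_.col F 0) z)
    (hder : ∀ z ∈ U, wDz (_root_.col F 0) z
      = fun i => lam⁻¹ * ((Real.exp (u z) / Real.sqrt 2 : ℝ) : ℂ)
          * (_root_.col F 1 z i - Complex.I * _root_.col F 2 z i)) :
    ∀ z ∈ U,
      (∑ i : Fin 5, (wDz (_root_.col F 0) z i) ^ 2 = 0) ∧
      (∑ i : Fin 5, wDz (_root_.col F 0) z i * (starRingEnd ℂ) (wDz (_root_.col F 0) z i)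
        = (Real.exp (2 * u z) : ℂ)) := by
  intro z hz
  have horth' := horth z hz
  have key : ∀ j k : Fin 5, ∑ i : Fin 5, F z i j * F z i k = (1 : Matrix (Fin 5) (Fin 5) ℝ) j k := by
    intro j k
    have := congrFun (congrFun horth' j) k
    simpa [Matrix.mul_apply, Matrix.transpose_apply] using this
  set a : Fin 5 → ℂ := fun i => ((F z i 1 : ℝ) : ℂ) with ha
  set b : Fin 5 → ℂ := fun i => ((F z i 2 : ℝ) : ℂ) with hb
  have hA : ∑ i : Fin 5, a i * a i = 1 := by
    have := key 1 1
    simp [Matrix.one_apply] at this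
    push_cast [ha]
    exact_mod_cast this
  have hB : ∑ i : Fin 5, b i * b i = 1 := by
    have := key 2 2
    simp [Matrix.one_apply] at this
    push_cast [hb]
    exact_mod_cast this
  have hAB : ∑ i : Fin 5, a i * b i = 0 := by
    have := key 1 2
    simp [Matrix.one_apply, (by decide : (1 : Fin 5) ≠ 2)] at this
    push_cast [ha, hb]
    exact_mod_cast this
  set c : ℂ := ((Real.exp (u z) / Real.sqrt 2 : ℝ) : ℂ) with hc
  have hd := hder z hz
  have hterm : ∀ i, wDz (_root_.col F 0) z i = lam⁻¹ * c * (a i - Complex.I * b i) := by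
    intro i
    rw [hd]
    rfl
  have hca : ∀ i, (starRingEnd ℂ) (a i) = a i := fun i => Complex.conj_ofReal (F z i 1)
  have hcb : ∀ i, (starRingEnd ℂ) (b i) = b i := fun i => Complex.conj_ofReal (F z i 2)
  have hcconj : (starRingEnd ℂ) c = c := Complex.conj_ofReal _
  have hlc : lam⁻¹ * (starRingEnd ℂ) lam⁻¹ = 1 := by
    rw [map_inv₀, ← mul_inv, Complex.mul_conj]
    norm_cast
    rw [Complex.normSq_eq_norm_sq, hlam]
    norm_num
  have hcc : c * c = (Real.exp (2 * u z) : ℂ) / 2 := by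
    have h2 : (Real.sqrt 2 : ℝ) ^ 2 = 2 := Real.sq_sqrt (by norm_num)
    have hr : (Real.exp (u z) / Real.sqrt 2) * (Real.exp (u z) / Real.sqrt 2)
        = Real.exp (2 * u z) / 2 := by
      rw [div_mul_div_comm, ← Real.exp_add, ← sq, h2]
      ring_nf
    rw [hc, ← Complex.ofReal_mul, hr]
    push_cast
    ring
  constructor
  · calc ∑ i : Fin 5, (wDz (_root_.col F 0) z i) ^ 2
        = (lam⁻¹ * c)^2 * ((∑ i : Fin 5, a i * a i)
            - (2 * Complex.I) * (∑ i : Fin 5, a i * b i)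
            - (∑ i : Fin 5, b i * b i)) := by
          simp only [Finset.mul_sum, ← Finset.sum_sub_distrib]
          refine Finset.sum_congr rfl fun i _ => ?_
          rw [hterm i]
          linear_combination (lam⁻¹)^2 * c^2 * (b i)^2 * Complex.I_sq
      _ = 0 := by rw [hA, hB, hAB]; ring
  · calc ∑ i : Fin 5, wDz (_root_.col F 0) z i * (starRingEnd ℂ) (wDz (_root_.col F 0) z i)
        = (lam⁻¹ * (starRingEnd ℂ) lam⁻¹) * (c * c)
            * ((∑ i : Fin 5, a i * a i) + (∑ i : Fin 5, b i * b i)) := by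
          simp only [Finset.mul_sum, ← Finset.sum_add_distrib]
          refine Finset.sum_congr rfl fun i _ => ?_
          rw [hterm i, RingHom.map_mul, RingHom.map_mul, RingHom.map_sub, RingHom.map_mul, hca, hcb, hcconj, Complex.conj_I]
          linear_combination (-(lam⁻¹ * (starRingEnd ℂ) lam⁻¹ * c * c * b i * b i)) * Complex.I_sq
      _ = (Real.exp (2 * u z) : ℂ) := by rw [hlc, hcc, hA, hB]; ring
end
end

section
/- Let U ⊆ ℂ be open, let u, h₁, h₂ : ℂ → ℝ and ξ₁, ξ₂, σ : ℂ → ℂ be ℝ-differentiable on U, set aᵢ := (e^{−u}·ξᵢ + e^{u}·hᵢ)/√2 and bᵢ := (e^{−u}·ξᵢ − e^{u}·hᵢ)/√2 (i = 1,2), and let λ ∈ ℂ with |λ| = 1. Let A_k be the 5×5 complex matrix whose only nonzero entries are (1,2) ↦ i·∂u, (2,1) ↦ −i·∂u, (3,4) ↦ σ, (4,3) ↦ −σ, and set A_λ := λ⁻¹·A_p(e^{u}/√2, a₁, a₂, b₁, b₂) + A_k. Let F : ℂ → Matrix (Fin 5) (Fin 5) ℝ be ℝ-differentiable on U with F(z)ᵀ·F(z)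 = 1 on U and, regarding F as complex-matrix valued, ∂F = F·A_λ on U. Denote by f, N₁, N₂ the columns 0, 3, 4 of F regarded as maps into ℂ⁵. Then ∂f is ℝ-differentiable on U and for every z ∈ U: Σᵢ (∂(∂f)(z))ᵢ·(N₁(z))ᵢ = λ⁻²·ξ₁(z), Σᵢ (∂(∂f)(z))ᵢ·(N₂(z))ᵢ = λ⁻²·ξ₂(z), and Σᵢ (∂N₂(z))ᵢ·(N₁(z))ᵢ = σ(z). (This shows that along the associated family the (2,0)-part of the second fundamental form scales as ξᵢ^λ = λ⁻²·ξᵢ while the normal connection coefficient σ is unchanged.) -/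
open Complex Matrix

noncomputable section

attribute [local instance] Matrix.normedAddCommGroup Matrix.normedSpace

def AKfun (u : ℂ → ℝ) (σ : ℂ → ℂ) (z : ℂ) : Matrix (Fin 5) (Fin 5) ℂ :=
  !![0, 0, 0, 0, 0;
     0, 0, Complex.I * wDz (fun w => (u w : ℂ)) z, 0, 0;
     0, -(Complex.I * wDz (fun w => (u w : ℂ)) z), 0, 0, 0;
     0, 0, 0, 0, σ z;
     0, 0, 0, -σ z, 0]

def Alam (lam : ℂ) (u h₁ h₂ : ℂ → ℝ) (ξ₁ ξ₂ σ : ℂ → ℂ) (z : ℂ) :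
    Matrix (Fin 5) (Fin 5) ℂ :=
  lam⁻¹ • Ap ((Real.exp (u z) / Real.sqrt 2 : ℝ) : ℂ)
      (aCoef u ξ₁ h₁ z) (aCoef u ξ₂ h₂ z) (bCoef u ξ₁ h₁ z) (bCoef u ξ₂ h₂ z)
    + AKfun u σ z

def toC (F : ℂ → Matrix (Fin 5) (Fin 5) ℝ) : ℂ → Matrix (Fin 5) (Fin 5) ℂ :=
  fun z => (F z).map (fun x => (x : ℂ))

/- ### auxiliary lemmas -/

lemma wDz_clm {E F' : Type*} [NormedAddCommGroup E] [NormedSpace ℂ E]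
    [NormedAddCommGroup F'] [NormedSpace ℂ F'] (L : E →L[ℂ] F') (G : ℂ → E) (z : ℂ)
    (hG : DifferentiableAt ℝ G z) :
    wDz (fun w => L (G w)) z = L (wDz G z) := by
  have h := ((L.restrictScalars ℝ).hasFDerivAt (x := G z)).comp z hG.hasFDerivAt
  have h2 : (fun w => L (G w)) = (⇑(L.restrictScalars ℝ) ∘ G) := rfl
  unfold wDz
  rw [h2, h.fderiv]
  simp [map_sub, _root_.map_smul]

lemma wDz_congr {E : Type*} [NormedAddCommGroup E] [NormedSpace ℂ E]
    {f g : ℂ → E} {z : ℂ} (h : f =ᶠ[nhds z] g) : wDz f z = wDz g z := by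
  unfold wDz; rw [h.fderiv_eq]

lemma wDz_mul (f g : ℂ → ℂ) (z : ℂ) (hf : DifferentiableAt ℝ f z)
    (hg : DifferentiableAt ℝ g z) :
    wDz (fun w => f w * g w) z = wDz f z * g z + f z * wDz g z := by
  unfold wDz
  rw [fderiv_fun_mul hf hg]
  simp only [ContinuousLinearMap.add_apply, ContinuousLinearMap.smul_apply, smul_eq_mul]
  ring

lemma wDz_sub (f g : ℂ → ℂ) (z : ℂ) (hf : DifferentiableAt ℝ f z)
    (hg : DifferentiableAt ℝ g z) :
    wDz (fun w => f w - g w) z = wDz f z - wDz g z := by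
  unfold wDz
  rw [fderiv_fun_sub hf hg]
  simp only [ContinuousLinearMap.sub_apply, smul_eq_mul]
  ring

lemma wDz_const_mul (a : ℂ) (f : ℂ → ℂ) (z : ℂ) (hf : DifferentiableAt ℝ f z) :
    wDz (fun w => a * f w) z = a * wDz f z := by
  unfold wDz
  rw [fderiv_const_mul hf]
  simp only [ContinuousLinearMap.smul_apply, smul_eq_mul]
  ring

def entryCLM (i j : Fin 5) : Matrix (Fin 5) (Fin 5) ℂ →L[ℂ] ℂ :=
  (ContinuousLinearMap.proj j).comp (ContinuousLinearMap.proj (R := ℂ)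
    (φ := fun _ : Fin 5 => Fin 5 → ℂ) i)

def colCLM (j : Fin 5) : Matrix (Fin 5) (Fin 5) ℂ →L[ℂ] (Fin 5 → ℂ) :=
  ContinuousLinearMap.pi (fun i => entryCLM i j)

def ofRealCLM5 : Matrix (Fin 5) (Fin 5) ℝ →L[ℝ] Matrix (Fin 5) (Fin 5) ℂ :=
  ContinuousLinearMap.pi fun i => ContinuousLinearMap.pi fun j =>
    Complex.ofRealCLM.comp ((ContinuousLinearMap.proj j).comp
      (ContinuousLinearMap.proj (R := ℝ) (φ := fun _ : Fin 5 => Fin 5 → ℝ) i))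

lemma scal_aux (li ξ hh E En S I' : ℂ) (hs : S ≠ 0) (he : E * En = 1) (h2 : S * S = 2)
    (hI : I' * I' = -1) :
    li * (E / S) * (li * ((En * ξ + E * hh) / S))
      - li * (E / S) * I' * (li * (I' * ((En * ξ - E * hh) / S))) = li ^ 2 * ξ := by
  field_simp
  linear_combination (2 * li ^ 2 * ξ) * he - (li ^ 2 * ξ) * h2
    + (li ^ 2 * E * (E * hh - En * ξ)) * hI

/-- along the associated family, the (2,0)-part of the second
fundamental form scales as ξᵢ^λ = λ⁻²ξᵢ while σ is unchanged. -/
theorem associated_family_second_fundamental_form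
    (U : Set ℂ) (hU : IsOpen U)
    (u h₁ h₂ : ℂ → ℝ) (ξ₁ ξ₂ σ : ℂ → ℂ)
    (hu : ∀ z ∈ U, DifferentiableAt ℝ (fun w => (u w : ℂ)) z)
    (hh₁ : ∀ z ∈ U, DifferentiableAt ℝ (fun w => (h₁ w : ℂ)) z)
    (hh₂ : ∀ z ∈ U, DifferentiableAt ℝ (fun w => (h₂ w : ℂ)) z)
    (hξ₁ : ∀ z ∈ U, DifferentiableAt ℝ ξ₁ z)
    (hξ₂ : ∀ z ∈ U, DifferentiableAt ℝ ξ₂ z)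
    (hσ : ∀ z ∈ U, DifferentiableAt ℝ σ z)
    (lam : ℂ) (hlam : ‖lam‖ = 1)
    (F : ℂ → Matrix (Fin 5) (Fin 5) ℝ)
    (hF : ∀ z ∈ U, DifferentiableAt ℝ F z)
    (horth : ∀ z ∈ U, (F z)ᵀ * F z = 1)
    (hMC : ∀ z ∈ U, wDz (toC F) z = toC F z * Alam lam u h₁ h₂ ξ₁ ξ₂ σ z) :
    (∀ z ∈ U, DifferentiableAt ℝ (fun w => wDz (_root_.col F 0) w) z) ∧
    (∀ z ∈ U,
      (∑ i : Fin 5, wDz (fun w => wDz (_root_.col F 0) w) z i * _root_.col F 3 z i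
          = lam⁻¹ ^ 2 * ξ₁ z) ∧
      (∑ i : Fin 5, wDz (fun w => wDz (_root_.col F 0) w) z i * _root_.col F 4 z i
          = lam⁻¹ ^ 2 * ξ₂ z) ∧
      (∑ i : Fin 5, wDz (_root_.col F 4) z i * _root_.col F 3 z i = σ z)) := by
  set A : ℂ → Matrix (Fin 5) (Fin 5) ℂ := Alam lam u h₁ h₂ ξ₁ ξ₂ σ with hA
  -- differentiability of toC F
  have hFc : ∀ z ∈ U, DifferentiableAt ℝ (toC F) z := fun z hz =>
    (ofRealCLM5.differentiableAt).comp z (hF z hz)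
  -- entry maps
  have hEdiff : ∀ z ∈ U, ∀ i j : Fin 5,
      DifferentiableAt ℝ (fun w => ((F w i j : ℝ) : ℂ)) z := by
    intro z hz i j
    exact (((entryCLM i j).restrictScalars ℝ).differentiableAt).comp z (hFc z hz)
  have hwcol : ∀ z ∈ U, ∀ j : Fin 5,
      wDz (_root_.col F j) z = fun i => (toC F z * A z) i j := by
    intro z hz j
    have h1 : _root_.col F j = fun w => colCLM j (toC F w) := rfl
    rw [h1]; refine (wDz_clm (colCLM j) (toC F) z (hFc z hz)).trans ?_; rw [hMC z hz]
    rfl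
  have hwentry : ∀ z ∈ U, ∀ i j : Fin 5,
      wDz (fun w => ((F w i j : ℝ) : ℂ)) z = (toC F z * A z) i j := by
    intro z hz i j
    have h1 : (fun w => ((F w i j : ℝ) : ℂ)) = fun w => entryCLM i j (toC F w) := rfl
    rw [h1]; refine (wDz_clm (entryCLM i j) (toC F) z (hFc z hz)).trans ?_; rw [hMC z hz]
    rfl
  -- the scalar coefficient c and the first-derivative function g
  set c : ℂ → ℂ := fun w => lam⁻¹ * ((Real.exp (u w) / Real.sqrt 2 : ℝ) : ℂ) with hcdef
  set g : ℂ → Fin 5 → ℂ :=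
    fun w i => c w * (((F w i 1 : ℝ) : ℂ) - Complex.I * ((F w i 2 : ℝ) : ℂ)) with hgdef
  have hcdiff : ∀ z ∈ U, DifferentiableAt ℝ c z := by
    intro z hz
    have hur : DifferentiableAt ℝ u z := by
      have := (Complex.reCLM.differentiableAt (x := ((u z : ℂ)))).comp z (hu z hz)
      have e : (⇑Complex.reCLM ∘ fun w => ((u w : ℝ) : ℂ)) = u := by funext w; simp
      rw [e] at this; exact this
    have hre : (fun w => lam⁻¹ * ((Real.exp (u w) / Real.sqrt 2 : ℝ) : ℂ))
        = fun w => (lam⁻¹ * (((Real.sqrt 2 : ℝ) : ℂ))⁻¹) * ((Real.exp (u w) : ℝ) : ℂ) := by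
      funext w; push_cast; ring
    rw [hcdef, hre]
    exact ((Complex.ofRealCLM.differentiableAt).comp z hur.exp).const_mul _
  have hgd : ∀ z ∈ U, DifferentiableAt ℝ g z := by
    intro z hz
    rw [hgdef]
    apply differentiableAt_pi.2
    intro i
    exact (hcdiff z hz).mul ((hEdiff z hz i 1).sub ((hEdiff z hz i 2).const_mul _))
  have heq : ∀ z ∈ U, wDz (_root_.col F 0) z = g z := by
    intro z hz
    rw [hwcol z hz 0]
    funext i
    rw [hgdef, hA]
    simp only [hcdef]
    simp [Alam, Ap, AKfun, toC, Matrix.mul_apply, Fin.sum_univ_five, Matrix.add_apply,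
      Matrix.smul_apply, Matrix.map_apply, smul_eq_mul]
    push_cast
    ring
  have heqev : ∀ z ∈ U, (fun w => wDz (_root_.col F 0) w) =ᶠ[nhds z] g := by
    intro z hz
    filter_upwards [hU.mem_nhds hz] with w hw using heq w hw
  -- orthonormality over ℂ
  have horthC : ∀ z ∈ U, ∀ m k : Fin 5,
      (∑ i : Fin 5, _root_.col F m z i * _root_.col F k z i) = if m = k then 1 else 0 := by
    intro z hz m k
    have h0 := congrFun (congrFun (horth z hz) m) k
    rw [Matrix.mul_apply, Matrix.one_apply] at h0
    simp only [Matrix.transpose_apply] at h0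
    have h1 : ((∑ i : Fin 5, F z i m * F z i k : ℝ) : ℂ) = if m = k then 1 else 0 := by
      rw [h0]; simp [apply_ite]
    simp only [_root_.col]
    rw [← h1]
    push_cast
    ring
  -- the key inner-product computation
  have key : ∀ z ∈ U, ∀ j k : Fin 5,
      (∑ i : Fin 5, (toC F z * A z) i j * _root_.col F k z i) = A z k j := by
    intro z hz j k
    calc ∑ i : Fin 5, (toC F z * A z) i j * _root_.col F k z i
        = ∑ i : Fin 5, ∑ m : Fin 5, toC F z i m * A z m j * _root_.col F k z i := by
          refine Finset.sum_congr rfl fun i _ => ?_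
          rw [Matrix.mul_apply, Finset.sum_mul]
      _ = ∑ m : Fin 5, A z m j * ∑ i : Fin 5, _root_.col F m z i * _root_.col F k z i := by
          rw [Finset.sum_comm]
          refine Finset.sum_congr rfl fun m _ => ?_
          rw [Finset.mul_sum]
          refine Finset.sum_congr rfl fun i _ => ?_
          simp only [toC, Matrix.map_apply, _root_.col]
          ring
      _ = A z k j := by
          simp only [horthC z hz, mul_ite, mul_one, mul_zero]
          simp
  refine ⟨fun z hz => ((heqev z hz).differentiableAt_iff).mpr (hgd z hz), fun z hz => ?_⟩
  -- second derivative of col 0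
  have hsecond : wDz (fun w => wDz (_root_.col F 0) w) z = wDz g z := wDz_congr (heqev z hz)
  have hwg : ∀ i : Fin 5, wDz g z i
      = wDz c z * (_root_.col F 1 z i - Complex.I * _root_.col F 2 z i)
        + c z * ((toC F z * A z) i 1 - Complex.I * (toC F z * A z) i 2) := by
    intro i
    have hproj : wDz g z i = wDz (fun w => g w i) z := by
      have h1 : (fun w => g w i)
          = fun w => (ContinuousLinearMap.proj (R := ℂ) (φ := fun _ : Fin 5 => ℂ) i) (g w) := rfl
      rw [h1, wDz_clm _ g z (hgd z hz)]
      rfl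
    have hediff : DifferentiableAt ℝ
        (fun w => ((F w i 1 : ℝ) : ℂ) - Complex.I * ((F w i 2 : ℝ) : ℂ)) z :=
      (hEdiff z hz i 1).sub ((hEdiff z hz i 2).const_mul _)
    rw [hproj, hgdef]
    rw [wDz_mul c _ z (hcdiff z hz) hediff]
    rw [wDz_sub _ _ z (hEdiff z hz i 1) ((hEdiff z hz i 2).const_mul _),
      wDz_const_mul _ _ z (hEdiff z hz i 2), hwentry z hz i 1, hwentry z hz i 2]
    rfl
  -- entries of A we need
  refine ⟨?_, ?_, ?_⟩
  · -- ξ₁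
    calc ∑ i : Fin 5, wDz (fun w => wDz (_root_.col F 0) w) z i * _root_.col F 3 z i
        = ∑ i : Fin 5, (wDz c z * (_root_.col F 1 z i * _root_.col F 3 z i)
            - wDz c z * Complex.I * (_root_.col F 2 z i * _root_.col F 3 z i)
            + (c z * ((toC F z * A z) i 1 * _root_.col F 3 z i)
              - c z * Complex.I * ((toC F z * A z) i 2 * _root_.col F 3 z i))) := by
          refine Finset.sum_congr rfl fun i _ => ?_
          rw [hsecond, hwg i]; ring
      _ = wDz c z * ∑ i : Fin 5, _root_.col F 1 z i * _root_.col F 3 z i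
            - wDz c z * Complex.I * ∑ i : Fin 5, _root_.col F 2 z i * _root_.col F 3 z i
            + (c z * ∑ i : Fin 5, (toC F z * A z) i 1 * _root_.col F 3 z i
              - c z * Complex.I * ∑ i : Fin 5, (toC F z * A z) i 2 * _root_.col F 3 z i) := by
          rw [Finset.sum_add_distrib, Finset.sum_sub_distrib, Finset.sum_sub_distrib,
            ← Finset.mul_sum, ← Finset.mul_sum, ← Finset.mul_sum, ← Finset.mul_sum]
      _ = c z * A z 3 1 - c z * Complex.I * A z 3 2 := by
          rw [horthC z hz 1 3, horthC z hz 2 3, key z hz 1 3, key z hz 2 3]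
          norm_num [show (1:Fin 5) ≠ 3 by decide, show (2:Fin 5) ≠ 3 by decide]
      _ = lam⁻¹ ^ 2 * ξ₁ z := by
          have hA31 : A z 3 1 = lam⁻¹ * aCoef u ξ₁ h₁ z := by
            rw [hA]; simp [Alam, Ap, AKfun, Matrix.add_apply, Matrix.smul_apply, smul_eq_mul,
              Matrix.vecHead, Matrix.vecTail]
          have hA32 : A z 3 2 = lam⁻¹ * (Complex.I * bCoef u ξ₁ h₁ z) := by
            rw [hA]; simp [Alam, Ap, AKfun, Matrix.add_apply, Matrix.smul_apply, smul_eq_mul,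
              Matrix.vecHead, Matrix.vecTail]
          rw [hA31, hA32]
          simp only [hcdef, aCoef, bCoef]
          have hs : ((Real.sqrt 2 : ℝ) : ℂ) ≠ 0 := by
            norm_cast; positivity
          have he : Complex.exp ((u z : ℝ) : ℂ) * Complex.exp (-((u z : ℝ) : ℂ)) = 1 := by
            rw [← Complex.exp_add]; simp
          have h2 : ((Real.sqrt 2 : ℝ) : ℂ) * ((Real.sqrt 2 : ℝ) : ℂ) = 2 := by
            rw [← Complex.ofReal_mul, Real.mul_self_sqrt (by norm_num : (0:ℝ) ≤ 2)]
            norm_num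
          push_cast
          exact scal_aux lam⁻¹ (ξ₁ z) ((h₁ z : ℝ) : ℂ) _ _ _ _ hs he h2 Complex.I_mul_I
  · calc ∑ i : Fin 5, wDz (fun w => wDz (_root_.col F 0) w) z i * _root_.col F 4 z i
        = ∑ i : Fin 5, (wDz c z * (_root_.col F 1 z i * _root_.col F 4 z i)
            - wDz c z * Complex.I * (_root_.col F 2 z i * _root_.col F 4 z i)
            + (c z * ((toC F z * A z) i 1 * _root_.col F 4 z i)
              - c z * Complex.I * ((toC F z * A z) i 2 * _root_.col F 4 z i))) := by
          refine Finset.sum_congr rfl fun i _ => ?_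
          rw [hsecond, hwg i]; ring
      _ = wDz c z * ∑ i : Fin 5, _root_.col F 1 z i * _root_.col F 4 z i
            - wDz c z * Complex.I * ∑ i : Fin 5, _root_.col F 2 z i * _root_.col F 4 z i
            + (c z * ∑ i : Fin 5, (toC F z * A z) i 1 * _root_.col F 4 z i
              - c z * Complex.I * ∑ i : Fin 5, (toC F z * A z) i 2 * _root_.col F 4 z i) := by
          rw [Finset.sum_add_distrib, Finset.sum_sub_distrib, Finset.sum_sub_distrib,
            ← Finset.mul_sum, ← Finset.mul_sum, ← Finset.mul_sum, ← Finset.mul_sum]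
      _ = c z * A z 4 1 - c z * Complex.I * A z 4 2 := by
          rw [horthC z hz 1 4, horthC z hz 2 4, key z hz 1 4, key z hz 2 4]
          norm_num [show (1:Fin 5) ≠ 4 by decide, show (2:Fin 5) ≠ 4 by decide]
      _ = lam⁻¹ ^ 2 * ξ₂ z := by
          have hA41 : A z 4 1 = lam⁻¹ * aCoef u ξ₂ h₂ z := by
            rw [hA]; simp [Alam, Ap, AKfun, Matrix.add_apply, Matrix.smul_apply, smul_eq_mul,
              Matrix.vecHead, Matrix.vecTail]
          have hA42 : A z 4 2 = lam⁻¹ * (Complex.I * bCoef u ξ₂ h₂ z) := by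
            rw [hA]; simp [Alam, Ap, AKfun, Matrix.add_apply, Matrix.smul_apply, smul_eq_mul,
              Matrix.vecHead, Matrix.vecTail]
          rw [hA41, hA42]
          simp only [hcdef, aCoef, bCoef]
          have hs : ((Real.sqrt 2 : ℝ) : ℂ) ≠ 0 := by
            norm_cast; positivity
          have he : Complex.exp ((u z : ℝ) : ℂ) * Complex.exp (-((u z : ℝ) : ℂ)) = 1 := by
            rw [← Complex.exp_add]; simp
          have h2 : ((Real.sqrt 2 : ℝ) : ℂ) * ((Real.sqrt 2 : ℝ) : ℂ) = 2 := by
            rw [← Complex.ofReal_mul, Real.mul_self_sqrt (by norm_num : (0:ℝ) ≤ 2)]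
            norm_num
          push_cast
          exact scal_aux lam⁻¹ (ξ₂ z) ((h₂ z : ℝ) : ℂ) _ _ _ _ hs he h2 Complex.I_mul_I
  · -- σ
    calc ∑ i : Fin 5, wDz (_root_.col F 4) z i * _root_.col F 3 z i
        = ∑ i : Fin 5, (toC F z * A z) i 4 * _root_.col F 3 z i := by
          refine Finset.sum_congr rfl fun i _ => ?_
          rw [hwcol z hz 4]
      _ = A z 3 4 := key z hz 4 3
      _ = σ z := by
          rw [hA]
          simp [Alam, Ap, AKfun, Matrix.add_apply, Matrix.smul_apply]
end
end
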